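/- There exist points p, q_1, …, q_12 in ℝ³ such that ‖p − q_i‖ ≤ 1 for all i and ‖q_i − q_j‖ > 1 for all i ≠ j. Equivalently, the complete bipartite graph K_{1,12} is a 3-dimensional unit ball graph (an icosahedral arrangement of points witnesses this). -/

import Mathlib

/-- Integer coordinates of the 12 vertices of an icosahedron (approximately
scaled: golden ratio `φ ≈ 809/500`). -/
private def vZ : Fin 12 → Fin 3 → ℤ :=
  ![![0, 500, 809], ![809, 0, 500], ![500, 809, 0],
    ![0, 500, -809], ![-809, 0, 500], ![500, -809, 0],
    ![0, -500, 809], ![809, 0, -500], ![-500, 809, 0],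
    ![0, -500, -809], ![-809, 0, -500], ![-500, -809, 0]]

private lemma vZ_norm : ∀ i, (vZ i 0)^2 + (vZ i 1)^2 + (vZ i 2)^2 ≤ 906304 := by decide

private lemma vZ_dist : ∀ i j, i ≠ j →
    906304 < (vZ i 0 - vZ j 0)^2 + (vZ i 1 - vZ j 1)^2 + (vZ i 2 - vZ j 2)^2 := by decide

private lemma norm3 (x : EuclideanSpace ℝ (Fin 3)) :
    ‖x‖ = Real.sqrt ((x 0)^2 + (x 1)^2 + (x 2)^2) := by
  rw [EuclideanSpace.norm_eq, Fin.sum_univ_three]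
  simp [Real.norm_eq_abs, sq_abs]

private lemma norm3_le (x : EuclideanSpace ℝ (Fin 3))
    (h : (x 0)^2 + (x 1)^2 + (x 2)^2 ≤ 1) : ‖x‖ ≤ 1 := by
  rw [norm3]; exact Real.sqrt_le_one.mpr h

private lemma norm3_gt (x : EuclideanSpace ℝ (Fin 3))
    (h : 1 < (x 0)^2 + (x 1)^2 + (x 2)^2) : 1 < ‖x‖ := by
  rw [norm3]
  have := Real.lt_sqrt (x := (1:ℝ)) (y := (x 0)^2 + (x 1)^2 + (x 2)^2) (by norm_num)
  rw [this]; simpa using h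

/-- `K_{1,12}` is a 3-dimensional unit ball graph: there exist a point `p` and
12 points `q i` in `ℝ³` with `‖p - q i‖ ≤ 1` for all `i` and `‖q i - q j‖ > 1` for `i ≠ j`. -/
theorem k_one_twelve_unit_ball_graph :
    ∃ (p : EuclideanSpace ℝ (Fin 3)) (q : Fin 12 → EuclideanSpace ℝ (Fin 3)),
      (∀ i, ‖p - q i‖ ≤ 1) ∧ (∀ i j, i ≠ j → 1 < ‖q i - q j‖) := by
  refine ⟨0, fun i => WithLp.toLp 2 (fun k => (vZ i k : ℝ) / 952 : Fin 3 → ℝ), ?_, ?_⟩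
  · intro i
    apply norm3_le
    have h := vZ_norm i
    have hc : ((vZ i 0 : ℝ))^2 + ((vZ i 1 : ℝ))^2 + ((vZ i 2 : ℝ))^2 ≤ 906304 := by
      exact_mod_cast h
    simp only [PiLp.sub_apply, PiLp.toLp_apply, PiLp.zero_apply, zero_sub, PiLp.neg_apply, PiLp.toLp_apply, neg_sq, div_pow]
    rw [← add_div, ← add_div, div_le_one (by norm_num)]
    norm_num
    linarith
  · intro i j hij
    apply norm3_gt
    have h := vZ_dist i j hij
    have hc : (906304 : ℝ) <
        ((vZ i 0 : ℝ) - (vZ j 0 : ℝ))^2 + ((vZ i 1 : ℝ) - (vZ j 1 : ℝ))^2 +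
          ((vZ i 2 : ℝ) - (vZ j 2 : ℝ))^2 := by
      exact_mod_cast h
    simp only [PiLp.sub_apply, PiLp.toLp_apply, div_sub_div_same, div_pow]
    rw [← add_div, ← add_div, lt_div_iff₀ (by norm_num)]
    norm_num
    linarith
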